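/- (Spreading branch repetitions) Let Π be a normal expanded natural deduction proof in M⊃ of a formula α with height(Π) ≤ m where m = |α|, and let p ∈ ℕ with p > 0. If some sequence of formulas b occurs as a branch of Π more than m^p times (i.e., more than m^p branches of Π have exactly the formula sequence b), then there is a level μ such that at least m^{p-1} of these branch instances have the minimal formula of b occurring at level μ in Π. -/
import Mathlib


/-- Formulas of minimal implicational logic M⊃. -/
inductive MFormula : Type
  | var : ℕ → MFormula
  | imp : MFormula → MFormula → MFormula
deriving DecidableEq

namespace MFormula

/-- Size of a formula: number of vertices of its syntax tree. -/
def size : MFormula → ℕ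
  | .var _ => 1
  | .imp a b => a.size + b.size + 1

/-- Subformula relation. -/
inductive Subf : MFormula → MFormula → Prop
  | refl (t : MFormula) : Subf t t
  | impL {s a b : MFormula} : Subf s a → Subf s (imp a b)
  | impR {s a b : MFormula} : Subf s b → Subf s (imp a b)

/-- The finite set of subformulas of a formula. -/
def subformulas : MFormula → Finset MFormula
  | .var n => {.var n}
  | .imp a b => insert (imp a b) (a.subformulas ∪ b.subformulas)

end MFormula

/-- Natural deduction derivation trees for M⊃.  A leaf is an assumption
occurrence, carrying its formula and `none` if it stays open, or `some n`
if it is discharged by the `n`-th ⊃-Intro application below it (de Bruijn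
style, counting enclosing ⊃-Intro applications from the leaf downwards).
`elim a b` applies ⊃-Elim with minor premise `a` and major premise `b`;
`intro A t` applies ⊃-Intro discharging (the marked occurrences of) `A`. -/
inductive NDTree : Type
  | leaf : MFormula → Option ℕ → NDTree
  | elim : NDTree → NDTree → NDTree
  | intro : MFormula → NDTree → NDTree
deriving DecidableEq

namespace NDTree

/-- Conclusion of a derivation tree relative to the list of formulas
introduced by enclosing ⊃-Intro applications (innermost first);
`none` if the tree is not a well-formed derivation. -/
def concl : NDTree → List MFormula → Option MFormula
  | .leaf A none, _ => some A
  | .leaf A (some n), ctx => if ctx[n]? = some A then some A else none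
  | .elim a b, ctx =>
      match concl a ctx, concl b ctx with
      | some x, some (.imp p q) => if p = x then some q else none
      | _, _ => none
  | .intro A t, ctx => (concl t (A :: ctx)).map (fun B => MFormula.imp A B)

/-- Size of a derivation: its number of nodes. -/
def size : NDTree → ℕ
  | .leaf _ _ => 1
  | .elim a b => a.size + b.size + 1
  | .intro _ t => t.size + 1

/-- Height of a derivation: maximal number of edges on a root-to-leaf path. -/
def height : NDTree → ℕ
  | .leaf _ _ => 0
  | .elim a b => max a.height b.height + 1
  | .intro _ t => t.height + 1

/-- Open assumptions of a subtree sitting below `d` of its own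
⊃-Intro applications (at top level `d = 0`): leaves discharged by no
⊃-Intro of the subtree itself. -/
def openAssumAux : NDTree → ℕ → Finset MFormula
  | .leaf A none, _ => {A}
  | .leaf A (some n), d => if d ≤ n then {A} else ∅
  | .elim a b, d => openAssumAux a d ∪ openAssumAux b d
  | .intro _ t, d => openAssumAux t (d + 1)

/-- The set of open (undischarged) assumptions of a derivation. -/
def openAssum (t : NDTree) : Finset MFormula := openAssumAux t 0

/-- A derivation is normal if no formula occurrence is simultaneously the
conclusion of a ⊃-Intro and the major premise of a ⊃-Elim. -/
def Normal : NDTree → Prop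
  | .leaf _ _ => True
  | .elim a b => Normal a ∧ Normal b ∧ ∀ A u, b ≠ .intro A u
  | .intro _ t => Normal t

/-- `T` is a proof of `α`: a derivation with conclusion `α` and
no open assumptions. -/
def IsProofOf (t : NDTree) (α : MFormula) : Prop :=
  concl t [] = some α ∧ openAssum t = ∅

/-- A normal derivation (in context `ctx`) is expanded if every minimal
formula, i.e. every formula occurrence that is both the conclusion of a
⊃-Elim and the premise of a ⊃-Intro, is a propositional variable. -/
def Expanded : NDTree → List MFormula → Prop
  | .leaf _ _, _ => True
  | .elim a b, ctx => Expanded a ctx ∧ Expanded b ctx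
  | .intro A t, ctx => Expanded t (A :: ctx) ∧
      (∀ u v, t = .elim u v → ∃ i, concl t (A :: ctx) = some (.var i))

/-- `Subtree s t`: `s` is a sub-derivation (a node of `t` together with
everything above it) of `t`. -/
inductive Subtree : NDTree → NDTree → Prop
  | refl (t : NDTree) : Subtree t t
  | elimL {s a b : NDTree} : Subtree s a → Subtree s (.elim a b)
  | elimR {s a b : NDTree} : Subtree s b → Subtree s (.elim a b)
  | intro {s : NDTree} {A : MFormula} {t : NDTree} : Subtree s t → Subtree s (.intro A t)

/-- Number of instances (sub-derivation occurrences identical to `s`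
as labeled trees) of `s` in a derivation. -/
def countInst (s : NDTree) : NDTree → ℕ
  | .leaf A o => if NDTree.leaf A o = s then 1 else 0
  | .elim a b => (if NDTree.elim a b = s then 1 else 0) + countInst s a + countInst s b
  | .intro A t => (if NDTree.intro A t = s then 1 else 0) + countInst s t

/-- Number of instances of `s` occurring at level (distance from the root) `μ`. -/
def countInstAt (s : NDTree) : NDTree → ℕ → ℕ
  | t, 0 => if t = s then 1 else 0
  | .leaf _ _, _ + 1 => 0
  | .elim a b, n + 1 => countInstAt s a n + countInstAt s b n
  | .intro _ t, n + 1 => countInstAt s t n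

/-- `OccAt T ctx s ctx'` : `s` occurs in `T` (whose own context is `ctx`)
as a node-with-everything-above-it, with enclosing-intro context `ctx'`. -/
inductive OccAt : NDTree → List MFormula → NDTree → List MFormula → Prop
  | refl (t : NDTree) (ctx : List MFormula) : OccAt t ctx t ctx
  | elimL {T : NDTree} {ctx : List MFormula} {a b : NDTree} {ctx' : List MFormula} :
      OccAt T ctx (.elim a b) ctx' → OccAt T ctx a ctx'
  | elimR {T : NDTree} {ctx : List MFormula} {a b : NDTree} {ctx' : List MFormula} :
      OccAt T ctx (.elim a b) ctx' → OccAt T ctx b ctx'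
  | intro {T : NDTree} {ctx : List MFormula} {A : MFormula} {t : NDTree} {ctx' : List MFormula} :
      OccAt T ctx (.intro A t) ctx' → OccAt T ctx t (A :: ctx')

/-- Each node of a derivation lies on a unique branch; branches are in
bijection with their endpoints: the root of the derivation and the minor
premises of ⊃-Elim applications. -/
def IsBranchEndpoint (T s : NDTree) (ctx : List MFormula) : Prop :=
  (s = T ∧ ctx = []) ∨ ∃ u, OccAt T [] (NDTree.elim s u) ctx

/-- The (top-down) sequence of formulas of the branch ending at the root of
the given subtree: trace upwards through premises of ⊃-Intro and major
premises of ⊃-Elim up to a top-formula. -/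
def branchSeq : NDTree → List MFormula → Option (List MFormula)
  | .leaf A o, ctx => (concl (.leaf A o) ctx).map (fun c => [c])
  | .elim a b, ctx =>
      match branchSeq b ctx, concl (.elim a b) ctx with
      | some l, some c => some (l ++ [c])
      | _, _ => none
  | .intro A t, ctx =>
      match branchSeq t (A :: ctx), concl (.intro A t) ctx with
      | some l, some c => some (l ++ [c])
      | _, _ => none

/-- The (top-down) E-part of the branch ending at the root of the given
subtree: the top-formula and the successive conclusions of major-premise
⊃-Elim steps, ending at the minimal formula of the branch. -/
def epart : NDTree → List MFormula → Option (List MFormula)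
  | .leaf A o, ctx => (concl (.leaf A o) ctx).map (fun c => [c])
  | .elim a b, ctx =>
      match epart b ctx, concl (.elim a b) ctx with
      | some l, some c => some (l ++ [c])
      | _, _ => none
  | .intro A t, ctx => epart t (A :: ctx)

/-- Number of ⊃-Intro applications forming the I-part at the bottom of a
branch endpoint subtree. -/
def introCount : NDTree → ℕ
  | .intro _ t => introCount t + 1
  | _ => 0

/-- Count of branch endpoints strictly inside the given subtree (i.e. minor
premises of ⊃-Elim) whose branch has formula sequence `b`. -/
def brCount (b : List MFormula) : NDTree → List MFormula → ℕ
  | .leaf _ _, _ => 0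
  | .elim a c, ctx =>
      (if branchSeq a ctx = some b then 1 else 0) + brCount b a ctx + brCount b c ctx
  | .intro A t, ctx => brCount b t (A :: ctx)

/-- Total number of branches of `T` whose formula sequence is `b`. -/
def brTotal (b : List MFormula) (T : NDTree) : ℕ :=
  (if branchSeq T [] = some b then 1 else 0) + brCount b T []

/-- Count of branch endpoints strictly inside the given subtree (whose root
is at level `d` of the ambient derivation) whose branch has formula
sequence `b` and whose minimal formula occurs at level `μ`. -/
def brMinCount (b : List MFormula) (μ : ℕ) : NDTree → List MFormula → ℕ → ℕ
  | .leaf _ _, _, _ => 0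
  | .elim a c, ctx, d =>
      (if branchSeq a ctx = some b ∧ d + 1 + introCount a = μ then 1 else 0)
      + brMinCount b μ a ctx (d + 1) + brMinCount b μ c ctx (d + 1)
  | .intro A t, ctx, d => brMinCount b μ t (A :: ctx) (d + 1)

/-- Total number of branches of `T` with formula sequence `b` whose minimal
formula occurs at level `μ` of `T`. -/
def brMinTotal (b : List MFormula) (μ : ℕ) (T : NDTree) : ℕ :=
  (if branchSeq T [] = some b ∧ introCount T = μ then 1 else 0) + brMinCount b μ T [] 0

/-- No occurrence of `A` in the given subtree (sitting at intro-depth `d`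
below a fixed ⊃-Intro application) is an open assumption of the subtree
escaping that ⊃-Intro: every leaf labeled `A` is discharged by an
⊃-Intro at distance at most `d`. -/
def NoOpenBeyond (A : MFormula) : NDTree → ℕ → Prop
  | .leaf B o, d => B = A → ∃ n, o = some n ∧ n ≤ d
  | .elim a b, d => NoOpenBeyond A a d ∧ NoOpenBeyond A b d
  | .intro _ t, d => NoOpenBeyond A t (d + 1)

/-- Every ⊃-Intro application of the derivation is greedy: it discharges
all occurrences of its assumption that are open in the sub-derivation of
its premise. -/
def Greedy : NDTree → Prop
  | .leaf _ _ => True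
  | .elim a b => Greedy a ∧ Greedy b
  | .intro A t => NoOpenBeyond A t 0 ∧ Greedy t

/-- A matrix of `T`: a sub-derivation all of whose instances in `T` occur
at a single level. -/
def IsMatrix (s T : NDTree) : Prop :=
  Subtree s T ∧ ∃ μ, ∀ ν, 0 < countInstAt s T ν → ν = μ

end NDTree

/-- A Kripke model for M⊃: a preordered set of worlds with a monotone
valuation on propositional variables. -/
structure KModel where
  World : Type
  le : World → World → Prop
  le_refl : ∀ w, le w w
  le_trans : ∀ {a b c}, le a b → le b c → le a c
  val : World → ℕ → Prop
  mono : ∀ {w w'}, le w w' → ∀ p, val w p → val w' p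

/-- Kripke satisfaction for M⊃. -/
def KSat (M : KModel) : MFormula → M.World → Prop
  | .var p, w => M.val w p
  | .imp a b, w => ∀ w', M.le w w' → KSat M a w' → KSat M b w'

/-- Semantic entailment: every world of every Kripke model satisfying all
of `Δ` satisfies `β`. -/
def KEntails (Δ : Set MFormula) (β : MFormula) : Prop :=
  ∀ (M : KModel) (w : M.World), (∀ δ ∈ Δ, KSat M δ w) → KSat M β w


namespace NDTreeAux
open NDTree

lemma size_pos (α : MFormula) : 1 ≤ α.size := by
  cases α <;> simp [MFormula.size]

lemma introCount_le_height : ∀ t : NDTree, t.introCount ≤ t.height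
  | .leaf _ _ => le_refl _
  | .elim _ _ => by simp [NDTree.introCount, NDTree.height]
  | .intro A t => by
      have := introCount_le_height t
      simp only [NDTree.introCount, NDTree.height]
      omega

lemma branchSeq_last (t : NDTree) (ctx : List MFormula) (l : List MFormula)
    (h : NDTree.branchSeq t ctx = some l) :
    ∃ c l', l = l' ++ [c] ∧ NDTree.concl t ctx = some c := by
  cases t with
  | leaf A o =>
    simp only [NDTree.branchSeq, Option.map_eq_some_iff] at h
    obtain ⟨c, hc, rfl⟩ := h
    exact ⟨c, [], rfl, hc⟩
  | elim a c =>
    rw [NDTree.branchSeq] at h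
    split at h
    · rename_i l0 c0 h1 h2
      cases h; exact ⟨c0, l0, rfl, h2⟩
    · simp at h
  | intro A u =>
    rw [NDTree.branchSeq] at h
    split at h
    · rename_i l0 c0 h1 h2
      cases h; exact ⟨c0, l0, rfl, h2⟩
    · simp at h

lemma concl_elim (a c : NDTree) (ctx : List MFormula) (q : MFormula)
    (h : NDTree.concl (.elim a c) ctx = some q) :
    ∃ x, NDTree.concl c ctx = some (.imp x q) := by
  rw [NDTree.concl] at h
  split at h
  · rename_i x p q' hca hcc
    split at h
    · rename_i hpx
      cases h
      subst hpx
      exact ⟨_, hcc⟩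
    · simp at h
  · simp at h

lemma headD (t : NDTree) : t.Normal → ∀ ctx l, (∀ A u, t ≠ .intro A u) →
    NDTree.branchSeq t ctx = some l →
    (∃ A o, t = .leaf A o) ∨ ∃ x y l', l = .imp x y :: y :: l' := by
  induction t with
  | leaf A o => intro _ ctx l _ _; exact Or.inl ⟨A, o, rfl⟩
  | intro A u ih => intro _ ctx l hni _; exact absurd rfl (hni A u)
  | elim a c iha ihc =>
    intro hn ctx l _ h
    right
    obtain ⟨hna, hnc, hcni⟩ := hn
    rw [NDTree.branchSeq] at h
    split at h
    · rename_i lc q h1 h2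
      cases h
      obtain ⟨x, hcc⟩ := concl_elim a c ctx q h2
      rcases ihc hnc ctx lc hcni h1 with ⟨B, o, hcl⟩ | ⟨x', y', l'', rfl⟩
      · subst hcl
        simp only [NDTree.branchSeq, Option.map_eq_some_iff] at h1
        obtain ⟨cq, hcb, rfl⟩ := h1
        rw [hcc] at hcb
        cases hcb
        exact ⟨x, q, [], by simp⟩
      · exact ⟨x', y', l'' ++ [q], by simp⟩
    · simp at h

lemma chainE (t : NDTree) : t.introCount = t.height → ∀ ctx l,
    NDTree.branchSeq t ctx = some l →
    (∃ A, l = [A]) ∨ ∃ x y l', l = y :: .imp x y :: l' := by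
  induction t with
  | leaf A o =>
    intro _ ctx l h
    left
    simp only [NDTree.branchSeq, Option.map_eq_some_iff] at h
    obtain ⟨c, _, rfl⟩ := h
    exact ⟨c, rfl⟩
  | elim a c iha ihc =>
    intro he
    exfalso
    simp [NDTree.introCount, NDTree.height] at he
  | intro A u ih =>
    intro he ctx l h
    right
    have he' : u.introCount = u.height := by
      simp only [NDTree.introCount, NDTree.height] at he; omega
    rw [NDTree.branchSeq] at h
    split at h
    · rename_i lu cc h1 h2
      cases h
      rw [NDTree.concl] at h2
      rw [Option.map_eq_some_iff] at h2
      obtain ⟨cu, hcu, rfl⟩ := h2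
      rcases ih he' (A :: ctx) lu h1 with ⟨B, rfl⟩ | ⟨x, y, l', rfl⟩
      · obtain ⟨c0, l0, hl0, hc0⟩ := branchSeq_last u (A :: ctx) [B] h1
        rw [hcu] at hc0
        cases hc0
        have hB : B = cu := by
          rcases l0 with _ | ⟨z, zs⟩
          · simpa using hl0
          · exfalso
            have := congrArg List.length hl0
            simp at this
        subst hB
        exact ⟨A, B, [], by simp⟩
      · exact ⟨x, y, l' ++ [MFormula.imp A cu], by simp⟩
    · simp at h

lemma brMinCount_zero (b : List MFormula) :
    ∀ (t : NDTree) (ctx : List MFormula) (d : ℕ), NDTree.brMinCount b 0 t ctx d = 0 := by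
  intro t
  induction t with
  | leaf A o => intro ctx d; rfl
  | elim a c iha ihc =>
    intro ctx d
    rw [NDTree.brMinCount, iha, ihc, if_neg]
    rintro ⟨-, h⟩
    omega
  | intro A u ih => intro ctx d; rw [NDTree.brMinCount]; exact ih _ _

lemma brMinCount_m (b : List MFormula) (m : ℕ) :
    ∀ (t : NDTree) (ctx : List MFormula) (d : ℕ), d + t.height ≤ m →
    0 < NDTree.brMinCount b m t ctx d →
    ∃ (a : NDTree) (ctx' : List MFormula),
      NDTree.branchSeq a ctx' = some b ∧ a.introCount = a.height := by
  intro t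
  induction t with
  | leaf A o => intro ctx d _ h; simp [NDTree.brMinCount] at h
  | elim a c iha ihc =>
    intro ctx d hd h
    rw [NDTree.height] at hd
    have hla : a.height ≤ max a.height c.height := le_max_left _ _
    have hlc : c.height ≤ max a.height c.height := le_max_right _ _
    rw [NDTree.brMinCount] at h
    by_cases hcond : NDTree.branchSeq a ctx = some b ∧ d + 1 + a.introCount = m
    · refine ⟨a, ctx, hcond.1, ?_⟩
      have h1 := introCount_le_height a
      omega
    · rw [if_neg hcond] at h
      by_cases hx : 0 < NDTree.brMinCount b m a ctx (d + 1)
      · exact iha ctx (d + 1) (by omega) hx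
      · exact ihc ctx (d + 1) (by omega) (by omega)
  | intro A u ih =>
    intro ctx d hd h
    rw [NDTree.brMinCount] at h
    rw [NDTree.height] at hd
    exact ih (A :: ctx) (d + 1) (by omega) h

lemma level_m (b : List MFormula) (m : ℕ) (T : NDTree) (hh : T.height ≤ m)
    (h : 0 < NDTree.brMinTotal b m T) :
    ∃ (a : NDTree) (ctx' : List MFormula),
      NDTree.branchSeq a ctx' = some b ∧ a.introCount = a.height := by
  rw [NDTree.brMinTotal] at h
  by_cases hc : NDTree.branchSeq T [] = some b ∧ T.introCount = m
  · refine ⟨T, [], hc.1, ?_⟩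
    have := introCount_le_height T
    omega
  · rw [if_neg hc] at h
    exact brMinCount_m b m T [] 0 (by omega) (by omega)

lemma level_0 (b : List MFormula) (T : NDTree) (α : MFormula)
    (hproof : T.IsProofOf α) (hnormal : T.Normal)
    (h : 0 < NDTree.brMinTotal b 0 T) :
    ∃ x y l', b = .imp x y :: y :: l' := by
  rw [NDTree.brMinTotal, brMinCount_zero] at h
  by_cases hc : NDTree.branchSeq T [] = some b ∧ T.introCount = 0
  · obtain ⟨hc1, hc2⟩ := hc
    cases T with
    | leaf A o =>
      exfalso
      cases o with
      | none =>
        have := hproof.2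
        simp [NDTree.openAssum, NDTree.openAssumAux] at this
      | some n =>
        have := hproof.1
        simp [NDTree.concl] at this
    | elim a c =>
      rcases headD _ hnormal [] b (by intro A u hh; exact absurd hh (by simp)) hc1 with
        ⟨A, o, hleaf⟩ | hok
      · simp at hleaf
      · exact hok
    | intro A u =>
      exfalso
      simp [NDTree.introCount] at hc2
  · rw [if_neg hc] at h
    omega

lemma sum_brMinCount (b : List MFormula) (N : ℕ) :
    ∀ (t : NDTree) (ctx : List MFormula) (d : ℕ), d + t.height ≤ N →
    ∑ μ ∈ Finset.range (N + 1), NDTree.brMinCount b μ t ctx d = NDTree.brCount b t ctx := by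
  intro t
  induction t with
  | leaf A o => intro ctx d _; simp [NDTree.brMinCount, NDTree.brCount]
  | elim a c iha ihc =>
    intro ctx d hd
    rw [NDTree.height] at hd
    have hla : a.height ≤ max a.height c.height := le_max_left _ _
    have hlc : c.height ≤ max a.height c.height := le_max_right _ _
    have hia := introCount_le_height a
    simp only [NDTree.brMinCount, NDTree.brCount, Finset.sum_add_distrib]
    rw [iha ctx (d + 1) (by omega), ihc ctx (d + 1) (by omega)]
    congr 1
    by_cases hP : NDTree.branchSeq a ctx = some b
    · simp only [hP, true_and, if_pos]
      have : ∀ μ ∈ Finset.range (N + 1),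
          (if d + 1 + a.introCount = μ then 1 else 0)
          = if μ = d + 1 + a.introCount then (1:ℕ) else 0 := by
        intro μ _
        by_cases hμ : d + 1 + a.introCount = μ
        · rw [if_pos hμ, if_pos hμ.symm]
        · rw [if_neg hμ, if_neg (fun hh => hμ hh.symm)]
      rw [Finset.sum_congr rfl this, Finset.sum_ite_eq' (Finset.range (N + 1))]
      rw [if_pos (by simp only [Finset.mem_range]; omega)]
    · simp [hP]
  | intro A u ih =>
    intro ctx d hd
    rw [NDTree.height] at hd
    simp only [NDTree.brMinCount, NDTree.brCount]
    exact ih (A :: ctx) (d + 1) (by omega)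

lemma sum_brMinTotal (b : List MFormula) (m : ℕ) (T : NDTree) (hh : T.height ≤ m) :
    ∑ μ ∈ Finset.range (m + 1), NDTree.brMinTotal b μ T = NDTree.brTotal b T := by
  simp only [NDTree.brMinTotal, NDTree.brTotal, Finset.sum_add_distrib]
  rw [sum_brMinCount b m T [] 0 (by omega)]
  congr 1
  by_cases hP : NDTree.branchSeq T [] = some b
  · simp only [hP, true_and, if_pos]
    have hiT := introCount_le_height T
    have : ∀ μ ∈ Finset.range (m + 1),
        (if T.introCount = μ then 1 else 0) = if μ = T.introCount then (1:ℕ) else 0 := by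
      intro μ _
      by_cases hμ : T.introCount = μ
      · rw [if_pos hμ, if_pos hμ.symm]
      · rw [if_neg hμ, if_neg (fun hh2 => hμ hh2.symm)]
    rw [Finset.sum_congr rfl this, Finset.sum_ite_eq' (Finset.range (m + 1))]
    rw [if_pos (by simp only [Finset.mem_range]; omega)]
  · simp [hP]

end NDTreeAux
/-- Spreading branch repetitions: if a formula sequence `b`
occurs as a branch of a linearly height-bounded normal expanded proof more
than m^p times, then at least m^(p-1) of these branch instances have their
minimal formula at a common level μ. -/
theorem spreading_branch_repetitions (T : NDTree) (α : MFormula) (p : ℕ)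
    (hproof : T.IsProofOf α) (hnormal : T.Normal) (hexp : T.Expanded [])
    (hheight : T.height ≤ α.size) (hp : 0 < p)
    (b : List MFormula) (hb : α.size ^ p < NDTree.brTotal b T) :
    ∃ μ, α.size ^ (p - 1) ≤ NDTree.brMinTotal b μ T := by
  set m := α.size with hm_def
  have hm : 1 ≤ m := NDTreeAux.size_pos α
  have hK : 1 ≤ m ^ (p - 1) := Nat.one_le_pow _ _ hm
  by_contra hcon
  push_neg at hcon
  have hsum := NDTreeAux.sum_brMinTotal b m T hheight
  have hexcl : NDTree.brMinTotal b 0 T = 0 ∨ NDTree.brMinTotal b m T = 0 := by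
    by_contra hno
    push_neg at hno
    obtain ⟨h0, hmm⟩ := hno
    obtain ⟨x, y, l1, hb0⟩ := NDTreeAux.level_0 b T α hproof hnormal (Nat.pos_of_ne_zero h0)
    obtain ⟨a, ctx', hba, hic⟩ := NDTreeAux.level_m b m T hheight (Nat.pos_of_ne_zero hmm)
    rcases NDTreeAux.chainE a hic ctx' b hba with ⟨A, hA⟩ | ⟨x', y', l2, hb2⟩
    · rw [hb0] at hA; simp at hA
    · rw [hb0] at hb2
      injection hb2 with e1 e2
      injection e2 with e3 e4
      rw [← e1] at e3
      have hsz := congrArg MFormula.size e3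
      simp only [MFormula.size] at hsz
      omega
  have hmp : m * m ^ (p - 1) = m ^ p := by
    conv_rhs => rw [show p = (p - 1) + 1 by omega]
    rw [pow_succ]
    ring
  have h3 : m * (m ^ (p - 1) - 1) + m = m ^ p := by
    rw [← hmp, ← Nat.mul_succ]
    congr 1
    omega
  cases hexcl with
  | inl hg0 =>
    have h1 : NDTree.brTotal b T = ∑ μ ∈ Finset.range m, NDTree.brMinTotal b (μ + 1) T := by
      rw [← hsum, Finset.sum_range_succ']
      simp [hg0]
    have h2 : ∑ μ ∈ Finset.range m, NDTree.brMinTotal b (μ + 1) T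
        ≤ ∑ _μ ∈ Finset.range m, (m ^ (p - 1) - 1) :=
      Finset.sum_le_sum (fun μ _ => by have := hcon (μ + 1); omega)
    rw [Finset.sum_const, Finset.card_range, smul_eq_mul] at h2
    omega
  | inr hgm =>
    have h1 : NDTree.brTotal b T = ∑ μ ∈ Finset.range m, NDTree.brMinTotal b μ T := by
      rw [← hsum, Finset.sum_range_succ]
      simp [hgm]
    have h2 : ∑ μ ∈ Finset.range m, NDTree.brMinTotal b μ T
        ≤ ∑ _μ ∈ Finset.range m, (m ^ (p - 1) - 1) :=
      Finset.sum_le_sum (fun μ _ => by have := hcon μ; omega)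
    rw [Finset.sum_const, Finset.card_range, smul_eq_mul] at h2
    omega
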